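/- Let x be an element of a (twisted) Weyl group that is at good position with respect to (Φ⁺, θ̄) for an admissible sequence θ̄ = (θ₁,…,θ_r). Then x is convex for Φ⁺ and Φ(x) = Φ^x := {γ ∈ Φ : x(γ) = γ}. -/

import Mathlib

open Pointwise

variable {V : Type*} [NormedAddCommGroup V] [InnerProductSpace ℝ V]

/-- minimal `i ≥ 1` with `(x^i) γ ∈ Φneg` (or `0` if none exists). -/
noncomputable def nx (x : V ≃ₗᵢ[ℝ] V) (Φneg : Set V) (γ : V) : ℕ :=
  sInf {i : ℕ | 1 ≤ i ∧ (x ^ i) γ ∈ Φneg}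

/-- `Φ(x)`: roots whose sign is preserved by all powers of `x`. -/
def PhiXI (x : V ≃ₗᵢ[ℝ] V) (Φpos : Set V) : Set V :=
  {γ ∈ Φpos ∪ -Φpos | ∀ i : ℤ, ((x ^ i) γ ∈ Φpos ↔ γ ∈ Φpos)}

/-- `V_x^θ = {v | x v + x⁻¹ v = 2 cos θ • v}`. -/
def Vtheta (x : V ≃ₗᵢ[ℝ] V) (θ : ℝ) : Set V :=
  {v | x v + x.symm v = (2 * Real.cos θ) • v}

/-- sum of the `V_x^θ` over a list of angles. -/
noncomputable def sumV (x : V ≃ₗᵢ[ℝ] V) (l : List ℝ) : Set V :=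
  l.foldr (fun θ S => Vtheta x θ + S) {0}

/-- `e` is a `Φ`-regular point of `S`: `e ∈ S` and every root hyperplane
through `e` contains `S`. -/
def RegIn (Φ S : Set V) (e : V) : Prop :=
  e ∈ S ∧ ∀ γ ∈ Φ, (inner ℝ e γ : ℝ) = 0 → ∀ v ∈ S, (inner ℝ v γ : ℝ) = 0

/-- `l` is a `Φ`-admissible sequence for `x`: all angles lie in `(0, π]` and
`Σ_j V_x^{θ_j}` contains a `Φ`-regular point of `(V^x)^⊥`. -/
noncomputable def AdmissibleI (Φpos : Set V) (x : V ≃ₗᵢ[ℝ] V) (l : List ℝ) : Prop :=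
  (∀ θ ∈ l, 0 < θ ∧ θ ≤ Real.pi) ∧
  ∃ e, e ∈ sumV x l ∧
    RegIn (Φpos ∪ -Φpos) {v | ∀ w : V, x w = w → (inner ℝ v w : ℝ) = 0} e

/-- `x` is at good position with respect to `(Φ⁺, l)`: for each `k`, the
closed dominant chamber contains a `Φ`-regular point of `Σ_{j ≤ k} V_x^{θ_j}`. -/
noncomputable def GoodPosI (Φpos : Set V) (x : V ≃ₗᵢ[ℝ] V) (l : List ℝ) : Prop :=
  ∀ k : ℕ, 1 ≤ k → k ≤ l.length →
    ∃ e, (∀ a ∈ Φpos, 0 ≤ (inner ℝ e a : ℝ)) ∧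
      RegIn (Φpos ∪ -Φpos) (sumV x (l.take k)) e

/-- quasi-convexity of `x` for `Φ⁺` with simple system `Δ`. -/
noncomputable def QuasiConvexI (Φpos Δ : Set V) (x : V ≃ₗᵢ[ℝ] V) : Prop :=
  (∃ J ⊆ Δ, PhiXI x Φpos = (Φpos ∪ -Φpos) ∩ (AddSubgroup.closure J : Set V)) ∧
  ∀ a ∈ Φpos \ PhiXI x Φpos, ∀ b ∈ Φpos \ PhiXI x Φpos,
    a + b ∈ Φpos → a + b ∉ PhiXI x Φpos →
    nx x (-Φpos) (a + b) ≤ max (nx x (-Φpos) a) (nx x (-Φpos) b)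

namespace GPCaux

local notation "⟪" a ", " b "⟫" => (inner ℝ a b : ℝ)

variable (x : V ≃ₗᵢ[ℝ] V)

lemma pow_succ_apply (n : ℕ) (v : V) : (x ^ (n+1)) v = x ((x ^ n) v) := by
  rw [pow_succ']; rfl

lemma pow_succ_apply' (n : ℕ) (v : V) : (x ^ (n+1)) v = (x ^ n) (x v) := by
  rw [pow_succ]; rfl

lemma adj_left (u w : V) : ⟪x u, w⟫ = ⟪u, x.symm w⟫ := by
  rw [← x.inner_map_map u (x.symm w), x.apply_symm_apply]

lemma adj_left' (u w : V) : ⟪x.symm u, w⟫ = ⟪u, x w⟫ := by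
  rw [← x.inner_map_map (x.symm u) w, x.apply_symm_apply]

variable {x}

lemma fix_pow {γ : V} (h : x γ = γ) (n : ℕ) : (x ^ n) γ = γ := by
  induction n with
  | zero => rfl
  | succ k ih => rw [pow_succ_apply, ih, h]

lemma fix_symm {γ : V} (h : x γ = γ) : x.symm γ = γ := by
  conv_lhs => rw [← h]
  exact x.symm_apply_apply γ

lemma fix_zpow {γ : V} (h : x γ = γ) (i : ℤ) : (x ^ i) γ = γ := by
  induction i using Int.rec with
  | ofNat n => rw [Int.ofNat_eq_coe, zpow_natCast]; exact fix_pow h n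
  | negSucc n =>
      have h1 : (x ^ (n+1)) γ = γ := fix_pow h (n+1)
      have : (x ^ (n+1))⁻¹ γ = γ := by
        conv_lhs => rw [← h1]
        exact (x ^ (n+1)).symm_apply_apply γ
      rw [zpow_negSucc]; exact this

lemma orbit_mem {Φ : Set V} (hx : x '' Φ = Φ) {γ : V} (hγ : γ ∈ Φ) (i : ℕ) :
    (x ^ i) γ ∈ Φ := by
  induction i with
  | zero => exact hγ
  | succ k ih =>
      rw [pow_succ_apply]
      rw [← hx]
      exact Set.mem_image_of_mem x ih

/-- The fixed subspace of `x`. -/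
def Fix (x : V ≃ₗᵢ[ℝ] V) : Submodule ℝ V where
  carrier := {v | x v = v}
  zero_mem' := map_zero x
  add_mem' := by intro a b ha hb; simp only [Set.mem_setOf_eq] at *; rw [map_add, ha, hb]
  smul_mem' := by intro c a ha; simp only [Set.mem_setOf_eq] at *; rw [map_smul, ha]

lemma fixed_of_orthocomp [FiniteDimensional ℝ V] (x : V ≃ₗᵢ[ℝ] V) (γ : V)
    (h : ∀ v : V, (∀ w, x w = w → ⟪v, w⟫ = 0) → ⟪v, γ⟫ = 0) : x γ = γ := by
  have hmem : γ ∈ (Fix x)ᗮᗮ := by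
    rw [Submodule.mem_orthogonal]
    intro u hu
    refine h u ?_
    intro w hw
    rw [real_inner_comm]
    exact (Submodule.mem_orthogonal (Fix x) u).mp hu w hw
  rw [Submodule.orthogonal_orthogonal] at hmem
  exact hmem

lemma Vtheta_orth_fix {θ : ℝ} (hθ : 0 < θ ∧ θ ≤ Real.pi) {v w : V}
    (hv : v ∈ Vtheta x θ) (hw : x w = w) : ⟪v, w⟫ = 0 := by
  have h1 : ⟪x v + x.symm v, w⟫ = (2 * Real.cos θ) * ⟪v, w⟫ := by
    rw [hv, real_inner_smul_left]
  have h2 : ⟪x v, w⟫ = ⟪v, w⟫ := by rw [adj_left, fix_symm hw]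
  have h3 : ⟪x.symm v, w⟫ = ⟪v, w⟫ := by rw [adj_left', hw]
  rw [inner_add_left, h2, h3] at h1
  have hcos : Real.cos θ < 1 := by
    rcases lt_or_eq_of_le (Real.cos_le_one θ) with h | h
    · exact h
    · have := (Real.cos_eq_one_iff_of_lt_of_lt (x := θ)
        (by nlinarith [Real.pi_pos]) (by nlinarith [Real.pi_pos])).mp h
      linarith [hθ.1]
  nlinarith [h1]

lemma sumV_orth_fix : ∀ (l : List ℝ), (∀ θ ∈ l, 0 < θ ∧ θ ≤ Real.pi) →
    ∀ {v w : V}, v ∈ sumV x l → x w = w → ⟪v, w⟫ = 0 := by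
  intro l
  induction l with
  | nil =>
      intro _ v w hv _
      have : v = 0 := by simpa [sumV] using hv
      rw [this, inner_zero_left]
  | cons θ t ih =>
      intro hl v w hv hw
      obtain ⟨u, hu, u', hu', rfl⟩ := Set.mem_add.mp hv
      rw [inner_add_left, Vtheta_orth_fix (hl θ (by simp)) hu hw,
        ih (fun θ' hθ' => hl θ' (by simp [hθ'])) hu' hw, add_zero]

lemma exists_neg_power {Φpos : Set V} (hdisj : Disjoint Φpos (-Φpos))
    (hx : x '' (Φpos ∪ -Φpos) = Φpos ∪ -Φpos)
    {m : ℕ} (hm : 1 ≤ m) (hxm : x ^ m = 1) (E : V)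
    (hdom : ∀ a ∈ Φpos, 0 ≤ ⟪E, a⟫)
    (hkey : ∀ γ ∈ Φpos ∪ -Φpos, ⟪E, γ⟫ = 0 → x γ = γ)
    (horth : ∀ w, x w = w → ⟪E, w⟫ = 0)
    {γ : V} (hγ : γ ∈ Φpos) (hfix : x γ ≠ γ) :
    ∃ i, 1 ≤ i ∧ (x ^ i) γ ∈ -Φpos := by
  by_contra hc
  push_neg at hc
  have hall : ∀ i : ℕ, (x ^ i) γ ∈ Φpos := by
    intro i
    rcases Nat.eq_zero_or_pos i with h | h
    · subst h; exact hγ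
    · have := orbit_mem hx (Set.mem_union_left _ hγ) i
      rcases this with h' | h'
      · exact h'
      · exact absurd h' (hc i h)
  set c : V := ∑ i ∈ Finset.range m, (x ^ i) γ with hc_def
  have hcfix : x c = c := by
    have h1 : x c = ∑ i ∈ Finset.range m, (x ^ (i+1)) γ := by
      rw [hc_def, map_sum]
      exact Finset.sum_congr rfl (fun i _ => (pow_succ_apply x i γ).symm)
    have h2 : ∑ i ∈ Finset.range m, (x ^ (i+1)) γ + (x ^ 0) γ
        = ∑ i ∈ Finset.range (m+1), (x ^ i) γ := (Finset.sum_range_succ' (fun i => (x ^ i) γ) m).symm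
    have h3 : ∑ i ∈ Finset.range (m+1), (x ^ i) γ = c + (x ^ m) γ := by
      rw [Finset.sum_range_succ]
    have h4 : (x ^ m) γ = γ := by rw [hxm]; rfl
    have h5 : (x ^ 0) γ = γ := rfl
    have := h2
    rw [h3, h4, h5] at this
    have := add_right_cancel this
    rw [h1, this]
  have hzero : ∑ i ∈ Finset.range m, ⟪E, (x ^ i) γ⟫ = 0 := by
    rw [← inner_sum]
    exact horth c hcfix
  have hpos : ∀ i ∈ Finset.range m, 0 < ⟪E, (x ^ i) γ⟫ := by
    intro i _
    rcases lt_or_eq_of_le (hdom _ (hall i)) with h | h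
    · exact h
    · exfalso
      have hfix' : x ((x ^ i) γ) = (x ^ i) γ :=
        hkey _ (Set.mem_union_left _ (hall i)) h.symm
      have : (x ^ i) (x γ) = (x ^ i) γ := by
        rw [← pow_succ_apply', pow_succ_apply, hfix']
      exact hfix ((x ^ i).injective this)
  have : 0 < ∑ i ∈ Finset.range m, ⟪E, (x ^ i) γ⟫ :=
    Finset.sum_pos hpos (Finset.nonempty_range_iff.mpr (by omega))
  rw [hzero] at this
  exact lt_irrefl 0 this

end GPCaux

namespace GPCaux2
open GPCaux

local notation "⟪" a ", " b "⟫" => (inner ℝ a b : ℝ)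

variable {V : Type*} [NormedAddCommGroup V] [InnerProductSpace ℝ V]

lemma Vtheta_zero_mem (x : V ≃ₗᵢ[ℝ] V) (θ : ℝ) : (0:V) ∈ Vtheta x θ := by
  show x 0 + x.symm 0 = (2 * Real.cos θ) • (0:V)
  simp

lemma Vtheta_map_mem {x : V ≃ₗᵢ[ℝ] V} {θ : ℝ} {v : V} (hv : v ∈ Vtheta x θ) :
    x v ∈ Vtheta x θ := by
  have h : x v + x.symm v = (2 * Real.cos θ) • v := hv
  show x (x v) + x.symm (x v) = (2 * Real.cos θ) • (x v)
  rw [x.symm_apply_apply]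
  have h2 := congrArg x h
  rw [map_add, map_smul, x.apply_symm_apply] at h2
  linear_combination (norm := module) h2

lemma Vtheta_symm_mem {x : V ≃ₗᵢ[ℝ] V} {θ : ℝ} {v : V} (hv : v ∈ Vtheta x θ) :
    x.symm v ∈ Vtheta x θ := by
  have h : x v + x.symm v = (2 * Real.cos θ) • v := hv
  show x (x.symm v) + x.symm (x.symm v) = (2 * Real.cos θ) • (x.symm v)
  rw [x.apply_symm_apply]
  have h2 := congrArg x.symm h
  rw [map_add, map_smul, x.symm_apply_apply] at h2
  linear_combination (norm := module) h2

lemma key_chain [FiniteDimensional ℝ V] {Φpos : Set V} {x : V ≃ₗᵢ[ℝ] V} {l : List ℝ}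
    {e_adm E : V}
    (hadm_mem : e_adm ∈ sumV x l)
    (hadm_reg : RegIn (Φpos ∪ -Φpos) {v | ∀ w : V, x w = w → ⟪v, w⟫ = 0} e_adm)
    (hregE : RegIn (Φpos ∪ -Φpos) (sumV x l) E) :
    ∀ γ ∈ Φpos ∪ -Φpos, ⟪E, γ⟫ = 0 → x γ = γ := by
  intro γ hγ h0
  have h1 : ⟪e_adm, γ⟫ = 0 := hregE.2 γ hγ h0 e_adm hadm_mem
  exact fixed_of_orthocomp x γ (fun v hv => hadm_reg.2 γ hγ h1 v hv)


lemma convex_aux [FiniteDimensional ℝ V] :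
    ∀ (l : List ℝ) (Φpos : Set V) (x : V ≃ₗᵢ[ℝ] V),
    Disjoint Φpos (-Φpos) →
    x '' (Φpos ∪ -Φpos) = Φpos ∪ -Φpos →
    (∃ m : ℕ, 1 ≤ m ∧ x ^ m = 1) →
    (∀ θ ∈ l, 0 < θ ∧ θ ≤ Real.pi) →
    (∃ e, e ∈ sumV x l ∧ RegIn (Φpos ∪ -Φpos) {v | ∀ w : V, x w = w → ⟪v, w⟫ = 0} e) →
    GoodPosI Φpos x l →
    ∀ a b : V, a ∈ Φpos → x a ≠ a → b ∈ Φpos → x b ≠ b → a + b ∈ Φpos →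
    nx x (-Φpos) (a + b) ≤ max (nx x (-Φpos) a) (nx x (-Φpos) b) := by
  intro l
  induction l with
  | nil =>
      intro Φpos x hdisj hx hord hl hadm hgp a b ha hfa hb hfb hs
      exfalso
      obtain ⟨e, he, hreg⟩ := hadm
      have he0 : e = 0 := by simpa [sumV] using he
      exact hfa (fixed_of_orthocomp x a (fun v hv =>
        hreg.2 a (Set.mem_union_left _ ha) (by rw [he0, inner_zero_left]) v hv))
  | cons θ t ih =>
      intro Φpos x hdisj hx hord hl hadm hgp a b ha hfa hb hfb hs
      by_cases hfs : x (a + b) = a + b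
      · have hempty : {i : ℕ | 1 ≤ i ∧ (x ^ i) (a + b) ∈ -Φpos} = ∅ := by
          ext i
          simp only [Set.mem_setOf_eq, Set.mem_empty_iff_false, iff_false, not_and]
          intro _
          rw [fix_pow hfs]
          exact fun hmem => Set.disjoint_left.mp hdisj hs hmem
        have h0 : nx x (-Φpos) (a + b) = 0 := by
          unfold nx; rw [hempty]; exact Nat.sInf_empty
        rw [h0]; exact Nat.zero_le _
      obtain ⟨m, hm, hxm⟩ := hord
      obtain ⟨e_adm, he_adm, hreg_adm⟩ := hadm
      obtain ⟨E, hEdom, hEreg⟩ := hgp (θ :: t).length (by simp) (le_refl _)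
      rw [List.take_length] at hEreg
      have hkey : ∀ γ ∈ Φpos ∪ -Φpos, ⟪E, γ⟫ = 0 → x γ = γ :=
        key_chain he_adm hreg_adm hEreg
      have hEorth : ∀ w, x w = w → ⟪E, w⟫ = 0 :=
        fun w hw => sumV_orth_fix _ hl hEreg.1 hw
      obtain ⟨e₁, hedom, hereg⟩ := hgp 1 (le_refl _) (by simp)
      have hereg1 : RegIn (Φpos ∪ -Φpos) (Vtheta x θ + ({0} : Set V)) e₁ := hereg
      have he₁mem : e₁ ∈ Vtheta x θ := by
        obtain ⟨u, hu, w, hw, huw⟩ := Set.mem_add.mp hereg1.1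
        have hw0 : w = 0 := hw
        rw [← huw, hw0, add_zero]
        exact hu
      -- the parabolic subsystem Ψ
      set Ψ : Set V := {γ : V | ∀ v ∈ Vtheta x θ, ⟪v, γ⟫ = 0} with hΨdef
      have hΨx : ∀ γ ∈ Ψ, x γ ∈ Ψ := by
        intro γ hγ v hv
        rw [← adj_left' x v γ]
        exact hγ _ (Vtheta_symm_mem hv)
      have hΨsymm : ∀ γ ∈ Ψ, x.symm γ ∈ Ψ := by
        intro γ hγ v hv
        rw [← adj_left x v γ]
        exact hγ _ (Vtheta_map_mem hv)
      have hΨ_of : ∀ γ, x γ ∈ Ψ → γ ∈ Ψ := by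
        intro γ h v hv
        have h2 := h (x v) (Vtheta_map_mem hv)
        rwa [x.inner_map_map] at h2
      have hΨpow : ∀ γ ∈ Ψ, ∀ i : ℕ, (x ^ i) γ ∈ Ψ := by
        intro γ hγ i
        induction i with
        | zero => exact hγ
        | succ k ihk => rw [pow_succ_apply]; exact hΨx _ ihk
      have hΨ_of_pow : ∀ (i : ℕ) γ, (x ^ i) γ ∈ Ψ → γ ∈ Ψ := by
        intro i
        induction i with
        | zero => exact fun γ h => h
        | succ k ihk =>
            intro γ h
            rw [pow_succ_apply' x k γ] at h
            exact hΨ_of γ (ihk (x γ) h)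
      have hΨneg : ∀ γ ∈ Ψ, -γ ∈ Ψ := by
        intro γ hγ v hv
        rw [inner_neg_right, hγ v hv, neg_zero]
      have hΨadd : ∀ γ δ, γ ∈ Ψ → δ ∈ Ψ → γ + δ ∈ Ψ := by
        intro γ δ hγ hδ v hv
        rw [inner_add_right, hγ v hv, hδ v hv, add_zero]
      have hregΨ : ∀ δ ∈ Φpos ∪ -Φpos, ⟪e₁, δ⟫ = 0 → δ ∈ Ψ := by
        intro δ hδ h0 v hv
        exact hereg1.2 δ hδ h0 v (Set.mem_add.mpr ⟨v, hv, 0, rfl, add_zero v⟩)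
      -- the scalar sequences
      set g : V → ℕ → ℝ := fun γ i => ⟪e₁, (x ^ i) γ⟫ with hgdef
      have grec : ∀ (γ : V) (i : ℕ), g γ (i+2) = 2 * Real.cos θ * g γ (i+1) - g γ i := by
        intro γ i
        have hv : x e₁ + x.symm e₁ = (2 * Real.cos θ) • e₁ := he₁mem
        have h1 : ⟪x e₁ + x.symm e₁, (x ^ (i+1)) γ⟫ = 2 * Real.cos θ * g γ (i+1) := by
          rw [hv, real_inner_smul_left]
        have h2 : ⟪x e₁, (x ^ (i+1)) γ⟫ = g γ i := by
          rw [adj_left]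
          congr 1
          rw [pow_succ_apply x i γ, x.symm_apply_apply]
        have h3 : ⟪x.symm e₁, (x ^ (i+1)) γ⟫ = g γ (i+2) := by
          rw [adj_left']
          congr 1
          exact (pow_succ_apply x (i+1) γ).symm
        rw [inner_add_left, h2, h3] at h1
        linarith
      have gadd : ∀ (p q : V) (i : ℕ), g (p + q) i = g p i + g q i := by
        intro p q i
        show ⟪e₁, (x ^ i) (p + q)⟫ = _
        rw [map_add, inner_add_right]
      have gΨ0 : ∀ γ ∈ Ψ, ∀ i, g γ i = 0 := fun γ hγ i => (hΨpow γ hγ i) e₁ he₁mem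
      have gne : ∀ γ ∈ Φpos ∪ -Φpos, γ ∉ Ψ → ∀ i, g γ i ≠ 0 := by
        intro γ hγ hΨγ i h0
        exact hΨγ (hΨ_of_pow i γ (hregΨ _ (orbit_mem hx hγ i) h0))
      have gnonneg : ∀ (γ : V) (i : ℕ), (x ^ i) γ ∈ Φpos → 0 ≤ g γ i :=
        fun γ i h => hedom _ h
      have gnonpos : ∀ (γ : V) (i : ℕ), (x ^ i) γ ∈ -Φpos → g γ i ≤ 0 := by
        intro γ i h
        rw [Set.mem_neg] at h
        have := hedom _ h
        rw [inner_neg_right] at this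
        show ⟪e₁, (x ^ i) γ⟫ ≤ 0
        linarith
      have gpos_of_notneg : ∀ γ ∈ Φpos, γ ∉ Ψ → ∀ i : ℕ, (x ^ i) γ ∉ -Φpos → 0 < g γ i := by
        intro γ hγ hΨγ i hneg
        have horb := orbit_mem hx (Set.mem_union_left _ hγ) i
        have hpos : (x ^ i) γ ∈ Φpos := by
          rcases horb with h | h
          · exact h
          · exact absurd h hneg
        exact lt_of_le_of_ne (gnonneg γ i hpos) (Ne.symm (gne γ (Set.mem_union_left _ hγ) hΨγ i))
      have gpos0 : ∀ γ ∈ Φpos, γ ∉ Ψ → 0 < g γ 0 := by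
        intro γ hγ hΨγ
        refine gpos_of_notneg γ hγ hΨγ 0 ?_
        have h0 : (x ^ 0) γ = γ := rfl
        rw [h0]
        exact fun hc => Set.disjoint_left.mp hdisj hγ hc
      have sign_iff : ∀ γ ∈ Φpos, γ ∉ Ψ → ∀ i : ℕ, ((x ^ i) γ ∈ -Φpos ↔ g γ i < 0) := by
        intro γ hγ hΨγ i
        constructor
        · intro h
          exact lt_of_le_of_ne (gnonpos γ i h) (gne γ (Set.mem_union_left _ hγ) hΨγ i)
        · intro h
          by_contra hc
          exact absurd (gpos_of_notneg γ hγ hΨγ i hc) (by linarith)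
      -- the sets of sign changes
      set S : V → Set ℕ := fun γ => {i : ℕ | 1 ≤ i ∧ (x ^ i) γ ∈ -Φpos} with hSdef
      have hnx : ∀ γ : V, nx x (-Φpos) γ = sInf (S γ) := fun γ => rfl
      have exneg : ∀ γ ∈ Φpos, x γ ≠ γ → (S γ).Nonempty := by
        intro γ hγ hf
        obtain ⟨i, hi1, hi2⟩ := exists_neg_power hdisj hx hm hxm E hEdom hkey hEorth hγ hf
        exact ⟨i, hi1, hi2⟩
      -- the discrete Sturm comparison
      have sturm : ∀ p q : V, p ∈ Φpos → p ∉ Ψ → q ∈ Φpos → q ∉ Ψ → (S p).Nonempty →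
          g p 0 * g q 1 - g p 1 * g q 0 ≤ 0 → sInf (S q) ≤ sInf (S p) := by
        intro p q hp hpΨ hq hqΨ hSp hW
        by_contra hlt
        push_neg at hlt
        have hmem := Nat.sInf_mem hSp
        set np := sInf (S p) with hnp
        have h1 : 1 ≤ np := hmem.1
        have hgpn : g p np < 0 := (sign_iff p hp hpΨ np).mp hmem.2
        have hppos : ∀ i < np, 0 < g p i := by
          intro i hi
          rcases Nat.eq_zero_or_pos i with h | h
          · subst h; exact gpos0 p hp hpΨ
          · refine gpos_of_notneg p hp hpΨ i (fun hc => ?_)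
            exact (Nat.notMem_of_lt_sInf hi) ⟨h, hc⟩
        have hqpos : ∀ i ≤ np, 0 < g q i := by
          intro i hi
          rcases Nat.eq_zero_or_pos i with h | h
          · subst h; exact gpos0 q hq hqΨ
          · refine gpos_of_notneg q hq hqΨ i (fun hc => ?_)
            exact (Nat.notMem_of_lt_sInf (lt_of_le_of_lt hi hlt)) ⟨h, hc⟩
        have wconst : ∀ i : ℕ,
            g p i * g q (i+1) - g p (i+1) * g q i = g p 0 * g q 1 - g p 1 * g q 0 := by
          intro i
          induction i with
          | zero => rfl
          | succ k ihk =>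
              have hp2 := grec p k
              have hq2 := grec q k
              rw [show k + 1 + 1 = k + 2 from rfl, hp2, hq2]
              linear_combination ihk + (g q (k+1) * 2 * Real.cos θ - g q (k+1) * 2 * Real.cos θ)
        obtain ⟨k, hk⟩ : ∃ k, np = k + 1 := ⟨np - 1, by omega⟩
        have hwk := wconst k
        have hle : g p k * g q (k+1) - g p (k+1) * g q k ≤ 0 := by rw [hwk]; exact hW
        have h2 := hppos k (by omega)
        have h3 := hqpos (k+1) (by omega)
        have h4 := hqpos k (by omega)
        rw [hk] at hgpn
        nlinarith [mul_pos h2 h3, mul_neg_of_neg_of_pos hgpn h4]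
      -- case analysis on membership in Ψ
      by_cases haΨ : a ∈ Ψ <;> by_cases hbΨ : b ∈ Ψ
      · -- both in Ψ : use the induction hypothesis for the parabolic subsystem
        set Φ' : Set V := Φpos ∩ Ψ with hΦ'
        have hΨneg' : ∀ γ, -γ ∈ Ψ → γ ∈ Ψ := by
          intro γ h
          have := hΨneg _ h
          rwa [neg_neg] at this
        have hunion : Φ' ∪ -Φ' = (Φpos ∪ -Φpos) ∩ Ψ := by
          ext γ
          simp only [Set.mem_union, Set.mem_inter_iff, Set.mem_neg, hΦ']
          constructor
          · rintro (⟨h1, h2⟩ | ⟨h1, h2⟩)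
            · exact ⟨Or.inl h1, h2⟩
            · exact ⟨Or.inr h1, hΨneg' _ h2⟩
          · rintro ⟨h1 | h1, h2⟩
            · exact Or.inl ⟨h1, h2⟩
            · exact Or.inr ⟨h1, hΨneg _ h2⟩
        have hdisj' : Disjoint Φ' (-Φ') := by
          rw [Set.disjoint_left]
          intro γ h1 h2
          rw [Set.mem_neg] at h2
          exact Set.disjoint_left.mp hdisj h1.1 (Set.mem_neg.mpr h2.1)
        have hx' : x '' (Φ' ∪ -Φ') = Φ' ∪ -Φ' := by
          rw [hunion]
          ext y
          constructor
          · rintro ⟨z, ⟨hz1, hz2⟩, rfl⟩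
            refine ⟨?_, hΨx z hz2⟩
            rw [← hx]
            exact Set.mem_image_of_mem x hz1
          · rintro ⟨hy1, hy2⟩
            refine ⟨x.symm y, ⟨?_, hΨsymm y hy2⟩, x.apply_symm_apply y⟩
            have hy3 : y ∈ x '' (Φpos ∪ -Φpos) := by rw [hx]; exact hy1
            obtain ⟨z, hz, hzy⟩ := hy3
            rwa [← hzy, x.symm_apply_apply]
        have hlt : ∀ θ' ∈ t, 0 < θ' ∧ θ' ≤ Real.pi :=
          fun θ' hθ' => hl θ' (List.mem_cons_of_mem θ hθ')
        have he_adm' : e_adm ∈ Vtheta x θ + sumV x t := he_adm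
        obtain ⟨u, hu, w, hw, huw⟩ := Set.mem_add.mp he_adm'
        have hadm' : ∃ e, e ∈ sumV x t ∧
            RegIn (Φ' ∪ -Φ') {v | ∀ w' : V, x w' = w' → ⟪v, w'⟫ = 0} e := by
          refine ⟨w, hw, ⟨fun w' hw' => sumV_orth_fix t hlt hw hw', ?_⟩⟩
          intro γ hγ h0
          rw [hunion] at hγ
          have h1 : ⟪e_adm, γ⟫ = 0 := by
            rw [← huw, inner_add_left, hγ.2 u hu, h0, add_zero]
          exact hreg_adm.2 γ hγ.1 h1
        have hgp' : GoodPosI Φ' x t := by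
          intro k hk1 hk2
          obtain ⟨e', hdom', hreg'⟩ := hgp (k+1) (by omega)
            (by simp only [List.length_cons]; omega)
          have hreg'1 : RegIn (Φpos ∪ -Φpos) (Vtheta x θ + sumV x (t.take k)) e' := hreg'
          obtain ⟨u', hu', w', hw', huw'⟩ := Set.mem_add.mp hreg'1.1
          refine ⟨w', ?_, ⟨hw', ?_⟩⟩
          · intro a' ha'
            have h5 : ⟪e', a'⟫ = ⟪u', a'⟫ + ⟪w', a'⟫ := by rw [← huw', inner_add_left]
            rw [ha'.2 u' hu', zero_add] at h5
            rw [← h5]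
            exact hdom' a' ha'.1
          · intro γ hγ h0 v hv
            rw [hunion] at hγ
            have h1 : ⟪e', γ⟫ = 0 := by
              rw [← huw', inner_add_left, hγ.2 u' hu', h0, add_zero]
            exact hreg'1.2 γ hγ.1 h1 v
              (Set.mem_add.mpr ⟨0, Vtheta_zero_mem x θ, v, hv, zero_add v⟩)
        have hres := ih Φ' x hdisj' hx' ⟨m, hm, hxm⟩ hlt hadm' hgp' a b
          ⟨ha, haΨ⟩ hfa ⟨hb, hbΨ⟩ hfb ⟨hs, hΨadd a b haΨ hbΨ⟩
        have hconv : ∀ γ ∈ Ψ, nx x (-Φ') γ = nx x (-Φpos) γ := by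
          intro γ hγ
          unfold nx
          congr 1
          ext i
          simp only [Set.mem_setOf_eq, Set.mem_neg, hΦ', Set.mem_inter_iff]
          constructor
          · rintro ⟨h1, h2, _⟩
            exact ⟨h1, h2⟩
          · rintro ⟨h1, h2⟩
            exact ⟨h1, h2, hΨneg _ (hΨpow γ hγ i)⟩
        rw [← hconv a haΨ, ← hconv b hbΨ, ← hconv (a+b) (hΨadd a b haΨ hbΨ)]
        exact hres
      · -- a ∈ Ψ, b ∉ Ψ
        have hsΨ : a + b ∉ Ψ := by
          intro hc
          apply hbΨ
          intro v hv
          have h1 := hc v hv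
          have h2 := haΨ v hv
          have h3 : ⟪v, a + b⟫ = ⟪v, a⟫ + ⟪v, b⟫ := inner_add_right v a b
          rw [h1, h2] at h3
          linarith
        have hgab : ∀ i, g (a + b) i = g b i := by
          intro i
          rw [gadd, gΨ0 a haΨ i, zero_add]
        have hSeq : S (a + b) = S b := by
          ext i
          simp only [hSdef, Set.mem_setOf_eq]
          constructor
          · rintro ⟨h1, h2⟩
            refine ⟨h1, (sign_iff b hb hbΨ i).mpr ?_⟩
            rw [← hgab i]
            exact (sign_iff (a+b) hs hsΨ i).mp h2
          · rintro ⟨h1, h2⟩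
            refine ⟨h1, (sign_iff (a+b) hs hsΨ i).mpr ?_⟩
            rw [hgab i]
            exact (sign_iff b hb hbΨ i).mp h2
        rw [hnx (a+b), hSeq, ← hnx b]
        exact le_max_right _ _
      · -- a ∉ Ψ, b ∈ Ψ
        have hsΨ : a + b ∉ Ψ := by
          intro hc
          apply haΨ
          intro v hv
          have h1 := hc v hv
          have h2 := hbΨ v hv
          have h3 : ⟪v, a + b⟫ = ⟪v, a⟫ + ⟪v, b⟫ := inner_add_right v a b
          rw [h1, h2] at h3 <;> try skip
          linarith
        have hgab : ∀ i, g (a + b) i = g a i := by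
          intro i
          rw [gadd, gΨ0 b hbΨ i, add_zero]
        have hSeq : S (a + b) = S a := by
          ext i
          simp only [hSdef, Set.mem_setOf_eq]
          constructor
          · rintro ⟨h1, h2⟩
            refine ⟨h1, (sign_iff a ha haΨ i).mpr ?_⟩
            rw [← hgab i]
            exact (sign_iff (a+b) hs hsΨ i).mp h2
          · rintro ⟨h1, h2⟩
            refine ⟨h1, (sign_iff (a+b) hs hsΨ i).mpr ?_⟩
            rw [hgab i]
            exact (sign_iff a ha haΨ i).mp h2
        rw [hnx (a+b), hSeq, ← hnx a]
        exact le_max_left _ _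
      · -- both not in Ψ : rotation lemma via Sturm comparison
        have hga0 : 0 < g a 0 := gpos0 a ha haΨ
        have hgb0 : 0 < g b 0 := gpos0 b hb hbΨ
        have hsΨ : a + b ∉ Ψ := by
          intro hc
          have h0 := gΨ0 _ hc 0
          rw [gadd] at h0
          linarith
        have hSa := exneg a ha hfa
        have hSb := exneg b hb hfb
        rcases le_or_gt (g a 0 * g b 1 - g a 1 * g b 0) 0 with hW | hW
        · have hWas : g a 0 * g (a+b) 1 - g a 1 * g (a+b) 0 ≤ 0 := by
            rw [gadd, gadd]
            nlinarith [hW]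
          have h6 := sturm a (a+b) ha haΨ hs hsΨ hSa hWas
          rw [hnx (a+b), hnx a, hnx b]
          exact le_trans h6 (le_max_left _ _)
        · have hWbs : g b 0 * g (a+b) 1 - g b 1 * g (a+b) 0 ≤ 0 := by
            rw [gadd, gadd]
            nlinarith [hW]
          have h6 := sturm b (a+b) hb hbΨ hs hsΨ hSb hWbs
          rw [hnx (a+b), hnx a, hnx b]
          exact le_trans h6 (le_max_right _ _)


lemma master [FiniteDimensional ℝ V]
    (Φpos Δ : Set V) (x : V ≃ₗᵢ[ℝ] V)
    (hdisj : Disjoint Φpos (-Φpos))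
    (hx : x '' (Φpos ∪ -Φpos) = Φpos ∪ -Φpos)
    (hord : ∃ m : ℕ, 1 ≤ m ∧ x ^ m = 1)
    (hΔ : Δ ⊆ Φpos)
    (hcoeff : ∀ γ ∈ Φpos, γ ∈ AddSubmonoid.closure Δ)
    (l : List ℝ) (hadm : AdmissibleI Φpos x l) (hgp : GoodPosI Φpos x l) :
    QuasiConvexI Φpos Δ x ∧ PhiXI x Φpos = {γ ∈ Φpos ∪ -Φpos | x γ = γ} := by
  obtain ⟨hl, e_adm, he_adm, hreg_adm⟩ := hadm
  obtain ⟨m, hm, hxm⟩ := hord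
  have hE : ∃ E : V, (∀ a ∈ Φpos, 0 ≤ ⟪E, a⟫) ∧
      (∀ γ ∈ Φpos ∪ -Φpos, ⟪E, γ⟫ = 0 → x γ = γ) ∧ (∀ w, x w = w → ⟪E, w⟫ = 0) := by
    cases l with
    | nil =>
        refine ⟨0, fun a _ => by rw [inner_zero_left], ?_, fun w _ => inner_zero_left w⟩
        intro γ hγ _
        have he0 : e_adm = 0 := by simpa [sumV] using he_adm
        exact fixed_of_orthocomp x γ (fun v hv =>
          hreg_adm.2 γ hγ (by rw [he0, inner_zero_left]) v hv)
    | cons θ t =>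
        obtain ⟨E, hEdom, hEreg⟩ := hgp (θ :: t).length (by simp) (le_refl _)
        rw [List.take_length] at hEreg
        exact ⟨E, hEdom, key_chain he_adm hreg_adm hEreg,
          fun w hw => sumV_orth_fix _ hl hEreg.1 hw⟩
  obtain ⟨E, hEdom, hEkey, hEorth⟩ := hE
  have part3 : PhiXI x Φpos = {γ ∈ Φpos ∪ -Φpos | x γ = γ} := by
    ext γ
    simp only [PhiXI, Set.mem_setOf_eq, Set.mem_sep_iff]
    constructor
    · rintro ⟨hγ, hiff⟩
      refine ⟨hγ, ?_⟩
      have hnat : ∀ i : ℕ, ((x ^ i) γ ∈ Φpos ↔ γ ∈ Φpos) := by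
        intro i
        have h := hiff (i : ℤ)
        rwa [zpow_natCast] at h
      rcases hγ with hγp | hγn
      · by_contra hf
        obtain ⟨i, hi1, hi2⟩ := exists_neg_power hdisj hx hm hxm E hEdom hEkey hEorth hγp hf
        exact Set.disjoint_left.mp hdisj ((hnat i).mpr hγp) hi2
      · have hγnp : γ ∉ Φpos := fun hc => Set.disjoint_left.mp hdisj hc hγn
        have hneg : -γ ∈ Φpos := Set.mem_neg.mp hγn
        have hnegall : ∀ i : ℕ, (x ^ i) (-γ) ∈ Φpos := by
          intro i
          have h1 : (x ^ i) γ ∉ Φpos := fun hc => hγnp ((hnat i).mp hc)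
          have h2 := orbit_mem hx (Set.mem_union_right _ hγn) i
          rcases h2 with h | h
          · exact absurd h h1
          · rw [map_neg]; exact Set.mem_neg.mp h
        by_contra hf
        have hf' : x (-γ) ≠ -γ := by
          intro hc
          apply hf
          rw [map_neg] at hc
          exact neg_injective hc
        obtain ⟨i, hi1, hi2⟩ :=
          exists_neg_power hdisj hx hm hxm E hEdom hEkey hEorth hneg hf'
        exact Set.disjoint_left.mp hdisj (hnegall i) hi2
    · rintro ⟨hγ, hfix⟩
      exact ⟨hγ, fun i => by rw [fix_zpow hfix i]⟩
  have phi_orth : ∀ γ ∈ Φpos ∪ -Φpos, (γ ∈ PhiXI x Φpos ↔ ⟪E, γ⟫ = 0) := by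
    intro γ hγ
    rw [part3]
    simp only [Set.mem_sep_iff]
    constructor
    · rintro ⟨_, hfix⟩; exact hEorth γ hfix
    · intro h0; exact ⟨hγ, hEkey γ hγ h0⟩
  set J : Set V := {a | a ∈ Δ ∧ ⟪E, a⟫ = 0} with hJ
  have hJΔ : J ⊆ Δ := fun a ha => ha.1
  have hmon : ∀ v ∈ AddSubmonoid.closure Δ,
      0 ≤ ⟪E, v⟫ ∧ (⟪E, v⟫ = 0 → v ∈ AddSubgroup.closure J) := by
    intro v hv
    induction hv using AddSubmonoid.closure_induction with
    | mem a ha => exact ⟨hEdom a (hΔ ha), fun h0 => AddSubgroup.subset_closure ⟨ha, h0⟩⟩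
    | zero => exact ⟨by rw [inner_zero_right], fun _ => AddSubgroup.zero_mem _⟩
    | add p q hp hq ihp ihq =>
        refine ⟨by rw [inner_add_right]; exact add_nonneg ihp.1 ihq.1, fun h0 => ?_⟩
        rw [inner_add_right] at h0
        have hp0 : ⟪E, p⟫ = 0 := by linarith [ihp.1, ihq.1]
        have hq0 : ⟪E, q⟫ = 0 := by linarith [ihp.1, ihq.1]
        exact AddSubgroup.add_mem _ (ihp.2 hp0) (ihq.2 hq0)
  have hgrp : ∀ v ∈ AddSubgroup.closure J, ⟪E, v⟫ = 0 := by
    intro v hv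
    induction hv using AddSubgroup.closure_induction with
    | mem a ha => exact ha.2
    | zero => rw [inner_zero_right]
    | add p q _ _ ihp ihq => rw [inner_add_right, ihp, ihq, add_zero]
    | neg p _ ihp => rw [inner_neg_right, ihp, neg_zero]
  have part1 : PhiXI x Φpos = (Φpos ∪ -Φpos) ∩ (AddSubgroup.closure J : Set V) := by
    ext γ
    constructor
    · intro hγ
      have hγΦ : γ ∈ Φpos ∪ -Φpos := hγ.1
      have h0 : ⟪E, γ⟫ = 0 := (phi_orth γ hγΦ).mp hγ
      refine ⟨hγΦ, ?_⟩
      rcases hγΦ with hp | hn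
      · exact (hmon γ (hcoeff γ hp)).2 h0
      · have hng : -γ ∈ AddSubgroup.closure J := by
          apply (hmon (-γ) (hcoeff _ (Set.mem_neg.mp hn))).2
          rw [inner_neg_right, h0, neg_zero]
        have h2 := AddSubgroup.neg_mem _ hng
        rwa [neg_neg] at h2
    · rintro ⟨hγΦ, hcl⟩
      exact (phi_orth γ hγΦ).mpr (hgrp γ hcl)
  have part2 : ∀ a ∈ Φpos \ PhiXI x Φpos, ∀ b ∈ Φpos \ PhiXI x Φpos,
      a + b ∈ Φpos → a + b ∉ PhiXI x Φpos →
      nx x (-Φpos) (a + b) ≤ max (nx x (-Φpos) a) (nx x (-Φpos) b) := by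
    intro a ha b hb hs _
    have hfa : x a ≠ a := by
      intro hc
      apply ha.2
      rw [part3]
      exact ⟨Set.mem_union_left _ ha.1, hc⟩
    have hfb : x b ≠ b := by
      intro hc
      apply hb.2
      rw [part3]
      exact ⟨Set.mem_union_left _ hb.1, hc⟩
    exact convex_aux l Φpos x hdisj hx ⟨m, hm, hxm⟩ hl ⟨e_adm, he_adm, hreg_adm⟩ hgp
      a b ha.1 hfa hb.1 hfb hs
  exact ⟨⟨⟨J, hJΔ, part1⟩, part2⟩, part3⟩

lemma inv_eq_symm (x : V ≃ₗᵢ[ℝ] V) : (x⁻¹ : V ≃ₗᵢ[ℝ] V) = x.symm := rfl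

lemma Vtheta_inv (x : V ≃ₗᵢ[ℝ] V) (θ : ℝ) : Vtheta x⁻¹ θ = Vtheta x θ := by
  ext v
  have key : ∀ w : V, (x⁻¹).symm w = x w := by
    intro w
    rw [inv_eq_symm, x.symm_symm]
  constructor
  · intro h
    have h2 : x⁻¹ v + (x⁻¹).symm v = (2 * Real.cos θ) • v := h
    rw [key, inv_eq_symm] at h2
    show x v + x.symm v = (2 * Real.cos θ) • v
    rw [← h2]; abel
  · intro h
    have h2 : x v + x.symm v = (2 * Real.cos θ) • v := h
    show x⁻¹ v + (x⁻¹).symm v = (2 * Real.cos θ) • v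
    rw [key, inv_eq_symm, ← h2]; abel

lemma sumV_inv (x : V ≃ₗᵢ[ℝ] V) : ∀ l : List ℝ, sumV x⁻¹ l = sumV x l
  | [] => rfl
  | θ :: t => by
      show Vtheta x⁻¹ θ + sumV x⁻¹ t = Vtheta x θ + sumV x t
      rw [Vtheta_inv, sumV_inv x t]

lemma fix_iff_inv (x : V ≃ₗᵢ[ℝ] V) (w : V) : x⁻¹ w = w ↔ x w = w := by
  rw [inv_eq_symm]
  constructor
  · intro h
    conv_lhs => rw [← h]
    exact x.apply_symm_apply w
  · exact fix_symm

lemma admissible_inv {Φpos : Set V} {x : V ≃ₗᵢ[ℝ] V} {l : List ℝ}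
    (h : AdmissibleI Φpos x l) : AdmissibleI Φpos x⁻¹ l := by
  obtain ⟨hl, e, he, hreg⟩ := h
  have hset : {v : V | ∀ w, x⁻¹ w = w → ⟪v, w⟫ = 0}
      = {v : V | ∀ w, x w = w → ⟪v, w⟫ = 0} := by
    ext v
    constructor <;> intro hv w hw
    · exact hv w ((fix_iff_inv x w).mpr hw)
    · exact hv w ((fix_iff_inv x w).mp hw)
  refine ⟨hl, e, ?_, ?_⟩
  · rw [sumV_inv]; exact he
  · rw [hset]; exact hreg

lemma goodpos_inv {Φpos : Set V} {x : V ≃ₗᵢ[ℝ] V} {l : List ℝ}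
    (h : GoodPosI Φpos x l) : GoodPosI Φpos x⁻¹ l := by
  intro k hk1 hk2
  obtain ⟨e, hdom, hreg⟩ := h k hk1 hk2
  refine ⟨e, hdom, ?_⟩
  rw [sumV_inv]
  exact hreg

lemma image_inv' {Φ : Set V} {x : V ≃ₗᵢ[ℝ] V} (hx : x '' Φ = Φ) : (x⁻¹ : V ≃ₗᵢ[ℝ] V) '' Φ = Φ := by
  ext y
  constructor
  · rintro ⟨z, hz, rfl⟩
    rw [← hx] at hz
    obtain ⟨w, hw, rfl⟩ := hz
    have : x⁻¹ (x w) = w := by rw [inv_eq_symm]; exact x.symm_apply_apply w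
    rwa [this]
  · intro hy
    refine ⟨x y, ?_, ?_⟩
    · rw [← hx]; exact Set.mem_image_of_mem x hy
    · rw [inv_eq_symm]; exact x.symm_apply_apply y

end GPCaux2

/-- a good position element is convex, and `Φ(x) = Φ^x`. -/
theorem good_position_convex [FiniteDimensional ℝ V]
    (Φpos Δ : Set V) (x : V ≃ₗᵢ[ℝ] V)
    (hfin : Φpos.Finite) (hdisj : Disjoint Φpos (-Φpos))
    (hx : x '' (Φpos ∪ -Φpos) = Φpos ∪ -Φpos)
    (hord : ∃ m : ℕ, 1 ≤ m ∧ x ^ m = 1)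
    (hΔ : Δ ⊆ Φpos)
    (hcoeff : ∀ γ ∈ Φpos, γ ∈ AddSubmonoid.closure Δ)
    (l : List ℝ) (hadm : AdmissibleI Φpos x l) (hgp : GoodPosI Φpos x l) :
    QuasiConvexI Φpos Δ x ∧ QuasiConvexI Φpos Δ x⁻¹ ∧
      PhiXI x Φpos = {γ ∈ Φpos ∪ -Φpos | x γ = γ} := by
  obtain ⟨qc1, part3⟩ :=
    GPCaux2.master Φpos Δ x hdisj hx hord hΔ hcoeff l hadm hgp
  have hord' : ∃ m : ℕ, 1 ≤ m ∧ (x⁻¹) ^ m = 1 := by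
    obtain ⟨m, hm, hxm⟩ := hord
    exact ⟨m, hm, by rw [inv_pow, hxm, inv_one]⟩
  obtain ⟨qc2, _⟩ :=
    GPCaux2.master Φpos Δ x⁻¹ hdisj (GPCaux2.image_inv' hx) hord' hΔ hcoeff l
      (GPCaux2.admissible_inv hadm) (GPCaux2.goodpos_inv hgp)
  exact ⟨qc1, qc2, part3⟩
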